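/- Let (λ_m)_{m∈ℕ} be a non-increasing sequence in [0,1] with 0 < Σ_m λ_m² ≤ Σ_m λ_m < ∞, and let 0 < γ < γ' < 1 and δ > 0 satisfy Σ_m λ_m² ≥ (1−δ) Σ_m λ_m. Then #{m : λ_m > γ} ≤ (1/γ' + δ/(γ(1−γ'))) · Σ_m λ_m. -/
import Mathlib


/-- Let `(λ_m)` be a non-increasing summable sequence in `[0,1]` with
`0 < Σ λ_m² ≤ Σ λ_m`, and suppose `Σ λ_m² ≥ (1−δ) Σ λ_m` for `0 < γ < γ' < 1`, `δ > 0`.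
Then `#{m : λ_m > γ} ≤ (1/γ' + δ/(γ(1−γ'))) Σ λ_m`. -/
theorem stmt10 (lam : ℕ → ℝ) (hmono : Antitone lam)
    (hmem : ∀ m, lam m ∈ Set.Icc (0 : ℝ) 1) (hsum : Summable lam)
    (hpos : 0 < ∑' m, (lam m) ^ 2) (hle : (∑' m, (lam m) ^ 2) ≤ ∑' m, lam m)
    (γ γ' δ : ℝ) (hγ0 : 0 < γ) (hγγ' : γ < γ') (hγ'1 : γ' < 1) (hδ : 0 < δ)
    (hδ2 : (1 - δ) * ∑' m, lam m ≤ ∑' m, (lam m) ^ 2) :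
    ({m : ℕ | γ < lam m}.ncard : ℝ) ≤ (1 / γ' + δ / (γ * (1 - γ'))) * ∑' m, lam m := by
  have hlam0 : ∀ m, 0 ≤ lam m := fun m => (hmem m).1
  have hlam1 : ∀ m, lam m ≤ 1 := fun m => (hmem m).2
  set S := ∑' m, lam m with hS
  have hSpos : 0 < S := lt_of_lt_of_le hpos hle
  have hγ'0 : 0 < γ' := lt_trans hγ0 hγγ'
  have h1γ' : 0 < 1 - γ' := by linarith
  have hsum2 : Summable (fun m => (lam m) ^ 2) := by
    apply Summable.of_nonneg_of_le (fun m => sq_nonneg _) (fun m => ?_) hsum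
    nlinarith [hlam0 m, hlam1 m]
  have hsumd : Summable (fun m => lam m - (lam m) ^ 2) := hsum.sub hsum2
  have htsumd : ∑' m, (lam m - (lam m) ^ 2) = S - ∑' m, (lam m) ^ 2 :=
    Summable.tsum_sub hsum hsum2
  -- finiteness
  have hfin : {m : ℕ | γ < lam m}.Finite := by
    have h := hsum.tendsto_cofinite_zero
    have h2 : ∀ᶠ m in Filter.cofinite, lam m < γ := h.eventually (gt_mem_nhds hγ0)
    refine (Filter.eventually_cofinite.mp h2).subset ?_
    intro m hm
    simp only [Set.mem_setOf_eq] at *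
    linarith
  set F := hfin.toFinset with hF
  have hcard : ({m : ℕ | γ < lam m}.ncard : ℝ) = (F.card : ℝ) := by
    rw [Set.ncard_eq_toFinset_card _ hfin]
  set F1 := F.filter (fun m => γ' < lam m) with hF1
  set F2 := F.filter (fun m => ¬ γ' < lam m) with hF2
  have hsplit : F1.card + F2.card = F.card :=
    Finset.card_filter_add_card_filter_not _
  -- bound on F1
  have hF1sum : (F1.card : ℝ) * γ' ≤ ∑ m ∈ F1, lam m := by
    have := Finset.card_nsmul_le_sum F1 lam γ'
      (fun m hm => le_of_lt (Finset.mem_filter.mp hm).2)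
    simpa [nsmul_eq_mul] using this
  have hF1S : ∑ m ∈ F1, lam m ≤ S := by
    exact Summable.sum_le_tsum F1 (fun m _ => hlam0 m) hsum
  have h1 : (F1.card : ℝ) ≤ S / γ' := by
    rw [le_div_iff₀ hγ'0]; linarith
  -- bound on F2
  have hF2γ : ∀ m ∈ F2, γ < lam m ∧ lam m ≤ γ' := by
    intro m hm
    obtain ⟨hmF, hm2⟩ := Finset.mem_filter.mp hm
    exact ⟨by simpa using hfin.mem_toFinset.mp hmF, le_of_not_gt hm2⟩
  have hF2sum : (F2.card : ℝ) * γ ≤ ∑ m ∈ F2, lam m := by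
    have := Finset.card_nsmul_le_sum F2 lam γ
      (fun m hm => le_of_lt (hF2γ m hm).1)
    simpa [nsmul_eq_mul] using this
  have hkey : (1 - γ') * ∑ m ∈ F2, lam m ≤ δ * S := by
    have hstep : (1 - γ') * ∑ m ∈ F2, lam m ≤ ∑ m ∈ F2, (lam m - (lam m) ^ 2) := by
      rw [Finset.mul_sum]
      refine Finset.sum_le_sum (fun m hm => ?_)
      have h := hF2γ m hm
      nlinarith [hlam0 m, h.1, h.2]
    have hstep2 : ∑ m ∈ F2, (lam m - (lam m) ^ 2) ≤ ∑' m, (lam m - (lam m) ^ 2) := by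
      refine Summable.sum_le_tsum F2 (fun m _ => ?_) hsumd
      nlinarith [hlam0 m, hlam1 m]
    rw [htsumd] at hstep2
    linarith
  have h2 : (F2.card : ℝ) ≤ δ * S / (γ * (1 - γ')) := by
    rw [le_div_iff₀ (by positivity)]
    nlinarith [hF2sum, hkey]
  have hring : (1 / γ' + δ / (γ * (1 - γ'))) * S = S / γ' + δ * S / (γ * (1 - γ')) := by
    ring
  rw [hcard, hring, ← hsplit]
  push_cast
  linarith
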